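/- arXiv:2601.15096 — 2 statements merged into one kernel-verified Lean document; each statement's English description precedes it below -/
import Mathlib

section
/- Assume s < 1/2 and let α ∈ (2s, 1]. Then there exists a constant C > 0 depending only on d, s, Λ and α such that for every bounded φ : ℝ^d → ℝ with finite Hölder seminorm [φ]_{C^{0,α}(ℝ^d)}, the values M_ρ^± φ(x) are finite for every x ∈ ℝ^d and for all x, y ∈ ℝ^d one has |M_ρ^± φ(x) − M_ρ^± φ(y)| ≤ C [φ]_{C^{0,α}(ℝ^d)} |x−y|^{α−2s} (both for M_ρ^+ and for M_ρ^−). -/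
open MeasureTheory Metric Set
open scoped Classical

noncomputable section

abbrev Ed (d : ℕ) := EuclideanSpace ℝ (Fin d)

/-- `min{|y|^{-d-2s}, ρ^{-d-2s}}`, with the convention that it equals `|y|^{-d-2s}` when `ρ = 0`. -/
def truncKer (d : ℕ) (s ρ : ℝ) (y : Ed d) : ℝ :=
  if ρ = 0 then ‖y‖ ^ (-(d : ℝ) - 2 * s)
  else min (‖y‖ ^ (-(d : ℝ) - 2 * s)) (ρ ^ (-(d : ℝ) - 2 * s))

/-- The kernel class `𝒦_ρ` with ellipticity constants `lam ≤ Lam` and order `2s`. -/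
def KernelClass (d : ℕ) (s lam Lam ρ : ℝ) : Set (Ed d → ℝ) :=
  {K | Measurable K ∧ (∀ y, 0 ≤ K y) ∧
    (∀ y : Ed d, y ≠ 0 → lam * truncKer d s ρ y ≤ K y) ∧
    (∀ r : ℝ, 0 < r →
      ∫⁻ y in ball (0 : Ed d) (2 * r) \ ball 0 r, ENNReal.ofReal (K y) ≤
        ENNReal.ofReal (Lam * r ^ (-(2 * s)))) ∧
    (s = 1 / 2 → ∀ r : ℝ, 0 < r →
      (∫ y in ball (0 : Ed d) (2 * r) \ ball 0 r, K y • y) = (0 : Ed d))}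

/-- The increment `δ_y u (x)`, whose form depends on whether `s < 1/2`, `s = 1/2` or `s > 1/2`. -/
def incr (d : ℕ) (s : ℝ) (u : Ed d → ℝ) (x y : Ed d) : ℝ :=
  if s < 1 / 2 then u (x + y) - u x
  else if s = 1 / 2 then u (x + y) - u x - (if ‖y‖ < 1 then fderiv ℝ u x y else 0)
  else u (x + y) - u x - fderiv ℝ u x y

/-- The linear integro-differential operator `L_K u (x) = ∫ δ_y u(x) K(y) dy`. -/
def opL (d : ℕ) (s : ℝ) (K u : Ed d → ℝ) (x : Ed d) : ℝ :=
  ∫ y, incr d s u x y * K y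

/-- Pucci extremal operator `M_ρ^- u(x) = inf_{K ∈ 𝒦_ρ} L_K u (x)`. -/
def pucciInf (d : ℕ) (s lam Lam ρ : ℝ) (u : Ed d → ℝ) (x : Ed d) : ℝ :=
  sInf ((fun K => opL d s K u x) '' KernelClass d s lam Lam ρ)

/-- Pucci extremal operator `M_ρ^+ u(x) = sup_{K ∈ 𝒦_ρ} L_K u (x)`. -/
def pucciSup (d : ℕ) (s lam Lam ρ : ℝ) (u : Ed d → ℝ) (x : Ed d) : ℝ :=
  sSup ((fun K => opL d s K u x) '' KernelClass d s lam Lam ρ)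

/-- Parabolic distance `d((x,t),(y,τ)) = max{|x-y|, |t-τ|^{1/(2s)}}`. -/
def parDist (d : ℕ) (s : ℝ) (p q : Ed d × ℝ) : ℝ :=
  max ‖p.1 - q.1‖ (|p.2 - q.2| ^ (1 / (2 * s)))

/-- The function `v` that equals the test function `φ` on the test cylinder
`B_ε(x₀) × (t₀-ε, t₀]` and `u` elsewhere. -/
def patchFn (d : ℕ) (u φ : Ed d → ℝ → ℝ) (x₀ : Ed d) (t₀ ε : ℝ) : Ed d → ℝ → ℝ :=
  fun x t => if x ∈ ball x₀ ε ∧ t ∈ Ioc (t₀ - ε) t₀ then φ x t else u x t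

/-- `φ` is an admissible (parabolic) test function on the cylinder `B_ε(x₀) × (t₀-ε, t₀]`:
`C^{1,1}` in space and left-differentiable in time. -/
def IsTestFn (d : ℕ) (φ : Ed d → ℝ → ℝ) (x₀ : Ed d) (t₀ ε : ℝ) : Prop :=
  (∀ t ∈ Ioc (t₀ - ε) t₀, ∀ x ∈ ball x₀ ε, DifferentiableAt ℝ (fun z => φ z t) x) ∧
  (∀ t ∈ Ioc (t₀ - ε) t₀, ∃ L : NNReal,
    LipschitzOnWith L (fun x => fderiv ℝ (fun z => φ z t) x) (ball x₀ ε)) ∧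
  (∀ x ∈ ball x₀ ε, ∀ t ∈ Ioc (t₀ - ε) t₀,
    ∃ D : ℝ, HasDerivWithinAt (fun τ => φ x τ) D (Iic t) t)

/-- Viscosity supersolution of `∂ₜ u + drift·|∇u| − M u ≥ f` in `Ω × I`. -/
def IsViscSuper (d : ℕ) (drift : ℝ) (M : (Ed d → ℝ) → Ed d → ℝ)
    (f : Ed d → ℝ → ℝ) (Ω : Set (Ed d)) (I : Set ℝ) (u : Ed d → ℝ → ℝ) : Prop :=
  LowerSemicontinuousOn (fun p : Ed d × ℝ => u p.1 p.2) (Ω ×ˢ I) ∧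
  ∀ x₀ ∈ Ω, ∀ t₀ ∈ I, ∀ ε : ℝ, 0 < ε → ball x₀ ε ⊆ Ω → Ioc (t₀ - ε) t₀ ⊆ I →
    ∀ φ : Ed d → ℝ → ℝ, IsTestFn d φ x₀ t₀ ε → φ x₀ t₀ = u x₀ t₀ →
      (∀ x ∈ ball x₀ ε, ∀ t ∈ Ioc (t₀ - ε) t₀, φ x t ≤ u x t) →
      f x₀ t₀ ≤
        derivWithin (patchFn d u φ x₀ t₀ ε x₀) (Iic t₀) t₀
          + drift * ‖fderiv ℝ (fun z => patchFn d u φ x₀ t₀ ε z t₀) x₀‖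
          - M (fun z => patchFn d u φ x₀ t₀ ε z t₀) x₀

/-- Viscosity subsolution of `∂ₜ u − drift·|∇u| − M u ≤ f` in `Ω × I`. -/
def IsViscSub (d : ℕ) (drift : ℝ) (M : (Ed d → ℝ) → Ed d → ℝ)
    (f : Ed d → ℝ → ℝ) (Ω : Set (Ed d)) (I : Set ℝ) (u : Ed d → ℝ → ℝ) : Prop :=
  UpperSemicontinuousOn (fun p : Ed d × ℝ => u p.1 p.2) (Ω ×ˢ I) ∧
  ∀ x₀ ∈ Ω, ∀ t₀ ∈ I, ∀ ε : ℝ, 0 < ε → ball x₀ ε ⊆ Ω → Ioc (t₀ - ε) t₀ ⊆ I →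
    ∀ φ : Ed d → ℝ → ℝ, IsTestFn d φ x₀ t₀ ε → φ x₀ t₀ = u x₀ t₀ →
      (∀ x ∈ ball x₀ ε, ∀ t ∈ Ioc (t₀ - ε) t₀, u x t ≤ φ x t) →
      derivWithin (patchFn d u φ x₀ t₀ ε x₀) (Iic t₀) t₀
          - drift * ‖fderiv ℝ (fun z => patchFn d u φ x₀ t₀ ε z t₀) x₀‖
          - M (fun z => patchFn d u φ x₀ t₀ ε z t₀) x₀ ≤ f x₀ t₀

lemma rpow_two_mul_aux (x : ℝ) (hx : 0 < x) (e : ℝ) : (2 * x) ^ e = x ^ e * 2 ^ e := by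
  rw [Real.mul_rpow (by norm_num) hx.le, mul_comm]

lemma rpow_div_two_aux (x : ℝ) (hx : 0 < x) (e : ℝ) : (x / 2) ^ e = x ^ e * 2 ^ (-e) := by
  rw [div_eq_mul_inv, Real.mul_rpow hx.le (by norm_num), Real.inv_rpow (by norm_num),
    ← Real.rpow_neg (by norm_num)]

lemma tail_id (s r : ℝ) (hr : 0 < r) (n : ℕ) :
    ((2:ℝ) ^ n * r) ^ (-(2*s)) = r ^ (-(2*s)) * ((2:ℝ) ^ (-(2*s))) ^ n := by
  induction n with
  | zero => simp
  | succ n ih =>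
      have h : (2:ℝ) ^ (n+1) * r = 2 * ((2:ℝ) ^ n * r) := by ring
      rw [h, rpow_two_mul_aux _ (by positivity), ih, pow_succ]
      ring

lemma annulus_id (s α r : ℝ) (hr : 0 < r) (n : ℕ) :
    (r / 2 ^ n) ^ α * (r / 2 ^ (n+1)) ^ (-(2*s)) =
      2 ^ (2*s) * r ^ (α - 2*s) * ((2:ℝ) ^ (-(α - 2*s))) ^ n := by
  induction n with
  | zero =>
      rw [pow_zero, div_one, pow_one, rpow_div_two_aux _ hr, neg_neg, pow_zero, mul_one,
        show α - 2*s = α + -(2*s) by ring, Real.rpow_add hr]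
      ring
  | succ n ih =>
      have h1 : r / 2 ^ (n+1) = (r / 2 ^ n) / 2 := by rw [pow_succ]; ring
      have h2 : r / 2 ^ (n+2) = (r / 2 ^ (n+1)) / 2 := by rw [pow_succ (n := n+1)]; ring
      calc (r / 2 ^ (n+1)) ^ α * (r / 2 ^ (n+2)) ^ (-(2*s))
          = ((r / 2 ^ n) / 2) ^ α * ((r / 2 ^ (n+1)) / 2) ^ (-(2*s)) := by rw [← h1, ← h2]
        _ = ((r / 2 ^ n) ^ α * 2 ^ (-α)) * ((r / 2 ^ (n+1)) ^ (-(2*s)) * 2 ^ (-(-(2*s)))) := by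
            rw [rpow_div_two_aux _ (by positivity), rpow_div_two_aux _ (by positivity)]
        _ = ((r / 2 ^ n) ^ α * (r / 2 ^ (n+1)) ^ (-(2*s))) * (2 ^ (-α) * 2 ^ (2*s)) := by
            rw [neg_neg]; ring
        _ = 2 ^ (2*s) * r ^ (α - 2*s) * ((2:ℝ) ^ (-(α - 2*s))) ^ n * 2 ^ (-α + 2*s) := by
            rw [ih, ← Real.rpow_add (by norm_num : (0:ℝ) < 2)]
        _ = 2 ^ (2*s) * r ^ (α - 2*s) * ((2:ℝ) ^ (-(α - 2*s))) ^ (n+1) := by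
            rw [show -α + 2*s = -(α - 2*s) by ring, pow_succ]; ring

lemma geom_tsum_aux {c q : ℝ} (hc : 0 ≤ c) (hq0 : 0 ≤ q) (hq1 : q < 1) :
    ∑' n : ℕ, ENNReal.ofReal (c * q ^ n) = ENNReal.ofReal (c * (1 - q)⁻¹) := by
  rw [← ENNReal.ofReal_tsum_of_nonneg (fun n => by positivity)
    ((summable_geometric_of_lt_one hq0 hq1).mul_left c), tsum_mul_left,
    tsum_geometric_of_lt_one hq0 hq1]

lemma cover_out {E : Type*} [NormedAddCommGroup E] {r : ℝ} (hr : 0 < r) :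
    (ball (0:E) r)ᶜ ⊆ ⋃ n : ℕ, ball (0:E) (2 * (2 ^ n * r)) \ ball 0 (2 ^ n * r) := by
  intro y hy
  simp only [mem_compl_iff, mem_ball, dist_zero_right, not_lt] at hy
  have hex : ∃ n : ℕ, ‖y‖ < 2 ^ n * r := by
    obtain ⟨n, hn⟩ := pow_unbounded_of_one_lt (‖y‖ / r) (by norm_num : (1:ℝ) < 2)
    exact ⟨n, by rwa [div_lt_iff₀ hr] at hn⟩
  classical
  set n₀ := Nat.find hex with hn₀
  have hlt : ‖y‖ < 2 ^ n₀ * r := Nat.find_spec hex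
  have hn0 : n₀ ≠ 0 := by
    intro h
    rw [h] at hlt; simp at hlt; linarith
  obtain ⟨m, hm⟩ := Nat.exists_eq_succ_of_ne_zero hn0
  have hge : 2 ^ m * r ≤ ‖y‖ := le_of_not_gt (Nat.find_min hex (by omega))
  refine mem_iUnion.mpr ⟨m, ?_⟩
  simp only [mem_diff, mem_ball, dist_zero_right, not_lt]
  refine ⟨?_, hge⟩
  calc ‖y‖ < 2 ^ n₀ * r := hlt
    _ = 2 * (2 ^ m * r) := by rw [hm, pow_succ]; ring

lemma cover_in {E : Type*} [NormedAddCommGroup E] {r : ℝ} (hr : 0 < r) :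
    ball (0:E) r \ {0} ⊆ ⋃ n : ℕ, ball (0:E) (2 * (r / 2 ^ (n+1))) \ ball 0 (r / 2 ^ (n+1)) := by
  intro y hy
  simp only [mem_diff, mem_ball, dist_zero_right, mem_singleton_iff] at hy
  obtain ⟨hylt, hy0⟩ := hy
  have hyn : 0 < ‖y‖ := norm_pos_iff.mpr hy0
  have hex : ∃ n : ℕ, r / 2 ^ n ≤ ‖y‖ := by
    obtain ⟨n, hn⟩ := pow_unbounded_of_one_lt (r / ‖y‖) (by norm_num : (1:ℝ) < 2)
    exact ⟨n, by rw [div_le_iff₀ (by positivity)]; rw [div_lt_iff₀ hyn] at hn; nlinarith⟩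
  classical
  set n₀ := Nat.find hex with hn₀
  have hle : r / 2 ^ n₀ ≤ ‖y‖ := Nat.find_spec hex
  have hn0 : n₀ ≠ 0 := by
    intro h; rw [h] at hle; simp at hle; linarith
  obtain ⟨m, hm⟩ := Nat.exists_eq_succ_of_ne_zero hn0
  have hgt : ‖y‖ < r / 2 ^ m := lt_of_not_ge (Nat.find_min hex (by omega))
  refine mem_iUnion.mpr ⟨m, ?_⟩
  simp only [mem_diff, mem_ball, dist_zero_right, not_lt]
  constructor
  · calc ‖y‖ < r / 2 ^ m := hgt
      _ = 2 * (r / 2 ^ (m+1)) := by rw [pow_succ]; ring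
  · rw [hm] at hle; exact hle
section Kernel
variable {d : ℕ} {s lam Lam ρ : ℝ} {K : Ed d → ℝ}

lemma kernel_annulus (hK : K ∈ KernelClass d s lam Lam ρ)
    {g : Ed d → ℝ} {a c : ℝ} (ha : 0 < a) (hc0 : 0 ≤ c)
    (hc : ∀ y ∈ ball (0:Ed d) (2*a) \ ball 0 a, g y ≤ c) (hg0 : ∀ y, 0 ≤ g y) :
    ∫⁻ y in ball (0:Ed d) (2*a) \ ball 0 a, ENNReal.ofReal (g y * K y) ≤
      ENNReal.ofReal (c * (Lam * a ^ (-(2*s)))) := by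
  obtain ⟨hKm, hK0, -, hKint, -⟩ := hK
  calc ∫⁻ y in ball (0:Ed d) (2*a) \ ball 0 a, ENNReal.ofReal (g y * K y)
      ≤ ∫⁻ y in ball (0:Ed d) (2*a) \ ball 0 a,
          ENNReal.ofReal c * ENNReal.ofReal (K y) := by
        refine setLIntegral_mono (measurable_const.mul
          (ENNReal.measurable_ofReal.comp hKm)) (fun y hy => ?_)
        rw [← ENNReal.ofReal_mul hc0]
        exact ENNReal.ofReal_le_ofReal (mul_le_mul_of_nonneg_right (hc y hy) (hK0 y))
    _ = ENNReal.ofReal c * ∫⁻ y in ball (0:Ed d) (2*a) \ ball 0 a, ENNReal.ofReal (K y) :=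
        lintegral_const_mul _ (ENNReal.measurable_ofReal.comp hKm)
    _ ≤ ENNReal.ofReal c * ENNReal.ofReal (Lam * a ^ (-(2*s))) :=
        mul_le_mul_right (hKint a ha) _
    _ = _ := (ENNReal.ofReal_mul hc0).symm

lemma tail_bound (hK : K ∈ KernelClass d s lam Lam ρ) (hs : 0 < s) (hL : 0 ≤ Lam)
    {r : ℝ} (hr : 0 < r) :
    ∫⁻ y in (ball (0:Ed d) r)ᶜ, ENNReal.ofReal (K y) ≤
      ENNReal.ofReal (Lam * (1 - 2 ^ (-(2*s)))⁻¹ * r ^ (-(2*s))) := by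
  have hq0 : (0:ℝ) ≤ 2 ^ (-(2*s)) := Real.rpow_nonneg (by norm_num) _
  have hq1 : (2:ℝ) ^ (-(2*s)) < 1 :=
    Real.rpow_lt_one_of_one_lt_of_neg one_lt_two (by linarith)
  calc ∫⁻ y in (ball (0:Ed d) r)ᶜ, ENNReal.ofReal (K y)
      ≤ ∫⁻ y in ⋃ n : ℕ, ball (0:Ed d) (2 * (2 ^ n * r)) \ ball 0 (2 ^ n * r),
          ENNReal.ofReal (K y) := lintegral_mono_set (cover_out hr)
    _ ≤ ∑' n : ℕ, ∫⁻ y in ball (0:Ed d) (2 * (2 ^ n * r)) \ ball 0 (2 ^ n * r),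
          ENNReal.ofReal (K y) := lintegral_iUnion_le _ _
    _ ≤ ∑' n : ℕ, ENNReal.ofReal ((Lam * r ^ (-(2*s))) * ((2:ℝ) ^ (-(2*s))) ^ n) := by
        refine ENNReal.tsum_le_tsum (fun n => ?_)
        refine le_trans (hK.2.2.2.1 (2 ^ n * r) (by positivity))
          (ENNReal.ofReal_le_ofReal (le_of_eq ?_))
        rw [tail_id s r hr n]; ring
    _ = ENNReal.ofReal ((Lam * r ^ (-(2*s))) * (1 - 2 ^ (-(2*s)))⁻¹) :=
        geom_tsum_aux (by positivity) hq0 hq1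
    _ = _ := by congr 1; ring

lemma inner_bound (hK : K ∈ KernelClass d s lam Lam ρ) (hs : 0 < s) (hL : 0 ≤ Lam)
    {α : ℝ} (hα : 2*s < α) {A : ℝ} (hA : 0 ≤ A) {ψ : Ed d → ℝ}
    (hψ : ∀ y, |ψ y| ≤ A * ‖y‖ ^ α) {r : ℝ} (hr : 0 < r) :
    ∫⁻ y in ball (0:Ed d) r, ENNReal.ofReal (|ψ y| * K y) ≤
      ENNReal.ofReal (A * (Lam * 2 ^ (2*s) * (1 - 2 ^ (-(α - 2*s)))⁻¹) * r ^ (α - 2*s)) := by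
  have hα0 : 0 < α := by linarith
  have hq0 : (0:ℝ) ≤ 2 ^ (-(α - 2*s)) := Real.rpow_nonneg (by norm_num) _
  have hq1 : (2:ℝ) ^ (-(α - 2*s)) < 1 :=
    Real.rpow_lt_one_of_one_lt_of_neg one_lt_two (by linarith)
  have hψ0 : ψ 0 = 0 := by
    have := hψ 0
    rw [norm_zero, Real.zero_rpow hα0.ne', mul_zero] at this
    exact abs_eq_zero.mp (le_antisymm this (abs_nonneg _))
  have hsplit : ball (0:Ed d) r ⊆ (ball (0:Ed d) r \ {0}) ∪ {0} := by
    intro y hy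
    by_cases h : y = 0
    · exact Or.inr (by simp [h])
    · exact Or.inl ⟨hy, h⟩
  calc ∫⁻ y in ball (0:Ed d) r, ENNReal.ofReal (|ψ y| * K y)
      ≤ ∫⁻ y in (ball (0:Ed d) r \ {0}) ∪ {0}, ENNReal.ofReal (|ψ y| * K y) :=
        lintegral_mono_set hsplit
    _ ≤ (∫⁻ y in ball (0:Ed d) r \ {0}, ENNReal.ofReal (|ψ y| * K y))
        + ∫⁻ y in ({0} : Set (Ed d)), ENNReal.ofReal (|ψ y| * K y) :=
        lintegral_union_le _ _ _
    _ = ∫⁻ y in ball (0:Ed d) r \ {0}, ENNReal.ofReal (|ψ y| * K y) := by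
        rw [lintegral_singleton, hψ0]
        simp
    _ ≤ ∫⁻ y in ⋃ n : ℕ, ball (0:Ed d) (2 * (r / 2 ^ (n+1))) \ ball 0 (r / 2 ^ (n+1)),
          ENNReal.ofReal (|ψ y| * K y) := lintegral_mono_set (cover_in hr)
    _ ≤ ∑' n : ℕ, ∫⁻ y in ball (0:Ed d) (2 * (r / 2 ^ (n+1))) \ ball 0 (r / 2 ^ (n+1)),
          ENNReal.ofReal (|ψ y| * K y) := lintegral_iUnion_le _ _
    _ ≤ ∑' n : ℕ, ENNReal.ofReal ((A * Lam * 2 ^ (2*s) * r ^ (α - 2*s)) *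
          ((2:ℝ) ^ (-(α - 2*s))) ^ n) := by
        refine ENNReal.tsum_le_tsum (fun n => ?_)
        have hc : ∀ y ∈ ball (0:Ed d) (2 * (r / 2 ^ (n+1))) \ ball 0 (r / 2 ^ (n+1)),
            |ψ y| ≤ A * (r / 2 ^ n) ^ α := by
          intro y hy
          have h2a : 2 * (r / 2 ^ (n+1)) = r / 2 ^ n := by rw [pow_succ]; ring
          have hylt : ‖y‖ ≤ r / 2 ^ n := by
            have := hy.1
            rw [mem_ball, dist_zero_right, h2a] at this
            exact this.le
          exact le_trans (hψ y) (mul_le_mul_of_nonneg_left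
            (Real.rpow_le_rpow (norm_nonneg _) hylt hα0.le) hA)
        refine le_trans (kernel_annulus ⟨hK.1, hK.2.1, hK.2.2.1, hK.2.2.2.1, hK.2.2.2.2⟩
          (by positivity) (by positivity) hc (fun y => abs_nonneg _))
          (ENNReal.ofReal_le_ofReal (le_of_eq ?_))
        have := annulus_id s α r hr n
        calc A * (r / 2 ^ n) ^ α * (Lam * (r / 2 ^ (n+1)) ^ (-(2*s)))
            = (A * Lam) * ((r / 2 ^ n) ^ α * (r / 2 ^ (n+1)) ^ (-(2*s))) := by ring
          _ = (A * Lam) * (2 ^ (2*s) * r ^ (α - 2*s) * ((2:ℝ) ^ (-(α - 2*s))) ^ n) := by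
              rw [this]
          _ = (A * Lam * 2 ^ (2*s) * r ^ (α - 2*s)) * ((2:ℝ) ^ (-(α - 2*s))) ^ n := by ring
    _ = ENNReal.ofReal ((A * Lam * 2 ^ (2*s) * r ^ (α - 2*s)) * (1 - 2 ^ (-(α - 2*s)))⁻¹) :=
        geom_tsum_aux (by positivity) hq0 hq1
    _ = _ := by congr 1; ring

end Kernel

lemma holder_continuous {d : ℕ} {φ : Ed d → ℝ} {H α : ℝ} (hα : 0 < α)
    (hφ : ∀ x y, |φ x - φ y| ≤ H * ‖x - y‖ ^ α) : Continuous φ := by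
  rw [continuous_iff_continuousAt]
  intro x₀
  have h0 : Filter.Tendsto (fun x => φ x - φ x₀) (nhds x₀) (nhds 0) := by
    refine squeeze_zero_norm (fun x => by simpa [Real.norm_eq_abs] using hφ x x₀) ?_
    have h1 : ContinuousAt (fun t : ℝ => H * t ^ α) 0 :=
      continuousAt_const.mul (Real.continuousAt_rpow_const 0 α (Or.inr hα.le))
    have h2 : Filter.Tendsto (fun x : Ed d => ‖x - x₀‖) (nhds x₀) (nhds 0) := by
      have h3 : Filter.Tendsto (fun x : Ed d => x - x₀) (nhds x₀) (nhds (x₀ - x₀)) :=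
        ((continuous_id.sub continuous_const).continuousAt)
      simpa using h3.norm
    have h1t : Filter.Tendsto (fun t : ℝ => H * t ^ α) (nhds 0) (nhds (H * (0:ℝ) ^ α)) := h1
    have := h1t.comp h2
    simpa [Function.comp_def, Real.zero_rpow hα.ne'] using this
  have := h0.add (tendsto_const_nhds (α := Ed d) (x := φ x₀))
  simpa [ContinuousAt] using this

section Workhorse
variable {d : ℕ} {s lam Lam ρ : ℝ} {K : Ed d → ℝ}

lemma opL_abs_bound (hK : K ∈ KernelClass d s lam Lam ρ) (hs : 0 < s) (hL : 0 ≤ Lam)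
    {α : ℝ} (hα : 2*s < α) {ψ : Ed d → ℝ} (hψm : Measurable ψ) {A B : ℝ}
    (hA : 0 ≤ A) (hB : 0 ≤ B)
    (hψA : ∀ y, |ψ y| ≤ A * ‖y‖ ^ α) (hψB : ∀ y, |ψ y| ≤ B) {r : ℝ} (hr : 0 < r) :
    Integrable (fun y => ψ y * K y) ∧
    |∫ y, ψ y * K y| ≤ A * (Lam * 2 ^ (2*s) * (1 - 2 ^ (-(α - 2*s)))⁻¹) * r ^ (α - 2*s)
      + B * (Lam * (1 - 2 ^ (-(2*s)))⁻¹) * r ^ (-(2*s)) := by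
  have hq1 : (2:ℝ) ^ (-(α - 2*s)) < 1 :=
    Real.rpow_lt_one_of_one_lt_of_neg one_lt_two (by linarith)
  have hq2 : (2:ℝ) ^ (-(2*s)) < 1 :=
    Real.rpow_lt_one_of_one_lt_of_neg one_lt_two (by linarith)
  have hq1' : (0:ℝ) < (1 - 2 ^ (-(α - 2*s)))⁻¹ := by
    rw [inv_pos]; linarith
  have hq2' : (0:ℝ) < (1 - 2 ^ (-(2*s)))⁻¹ := by
    rw [inv_pos]; linarith
  have hK0 := hK.2.1
  have hKm := hK.1
  set T₁ := A * (Lam * 2 ^ (2*s) * (1 - 2 ^ (-(α - 2*s)))⁻¹) * r ^ (α - 2*s) with hT₁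
  set T₂ := B * (Lam * (1 - 2 ^ (-(2*s)))⁻¹) * r ^ (-(2*s)) with hT₂
  have hT₁0 : 0 ≤ T₁ := by positivity
  have hT₂0 : 0 ≤ T₂ := by positivity
  have heq : ∀ y, ENNReal.ofReal ‖ψ y * K y‖ = ENNReal.ofReal (|ψ y| * K y) := fun y => by
    rw [Real.norm_eq_abs, abs_mul, abs_of_nonneg (hK0 y)]
  have key : ∫⁻ y, ENNReal.ofReal ‖ψ y * K y‖ ≤ ENNReal.ofReal (T₁ + T₂) := by
    have hsplit := lintegral_add_compl (μ := volume)
      (fun y => ENNReal.ofReal (|ψ y| * K y)) (measurableSet_ball (x := (0:Ed d)) (ε := r))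
    calc ∫⁻ y, ENNReal.ofReal ‖ψ y * K y‖
        = ∫⁻ y, ENNReal.ofReal (|ψ y| * K y) := lintegral_congr heq
      _ = (∫⁻ y in ball (0:Ed d) r, ENNReal.ofReal (|ψ y| * K y))
          + ∫⁻ y in (ball (0:Ed d) r)ᶜ, ENNReal.ofReal (|ψ y| * K y) := hsplit.symm
      _ ≤ ENNReal.ofReal T₁ + ENNReal.ofReal T₂ := by
          refine add_le_add (inner_bound hK hs hL hα hA hψA hr) ?_
          calc ∫⁻ y in (ball (0:Ed d) r)ᶜ, ENNReal.ofReal (|ψ y| * K y)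
              ≤ ∫⁻ y in (ball (0:Ed d) r)ᶜ, ENNReal.ofReal B * ENNReal.ofReal (K y) := by
                refine setLIntegral_mono (measurable_const.mul
                  (ENNReal.measurable_ofReal.comp hKm)) (fun y _ => ?_)
                rw [← ENNReal.ofReal_mul hB]
                exact ENNReal.ofReal_le_ofReal
                  (mul_le_mul_of_nonneg_right (hψB y) (hK0 y))
            _ = ENNReal.ofReal B * ∫⁻ y in (ball (0:Ed d) r)ᶜ, ENNReal.ofReal (K y) :=
                lintegral_const_mul _ (ENNReal.measurable_ofReal.comp hKm)
            _ ≤ ENNReal.ofReal B * ENNReal.ofReal (Lam * (1 - 2 ^ (-(2*s)))⁻¹ * r ^ (-(2*s))) :=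
                mul_le_mul_right (tail_bound hK hs hL hr) _
            _ = ENNReal.ofReal T₂ := by rw [← ENNReal.ofReal_mul hB, hT₂]; ring_nf
      _ = ENNReal.ofReal (T₁ + T₂) := (ENNReal.ofReal_add hT₁0 hT₂0).symm
  have hint : Integrable (fun y => ψ y * K y) := by
    refine ⟨(hψm.mul hKm).aestronglyMeasurable, ?_⟩
    rw [hasFiniteIntegral_iff_norm]
    exact lt_of_le_of_lt key ENNReal.ofReal_lt_top
  refine ⟨hint, ?_⟩
  calc |∫ y, ψ y * K y| ≤ (∫⁻ y, ENNReal.ofReal ‖ψ y * K y‖).toReal := by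
        simpa [Real.norm_eq_abs] using
          norm_integral_le_lintegral_norm (μ := (volume : Measure (Ed d)))
            (fun y => ψ y * K y)
    _ ≤ T₁ + T₂ := ENNReal.toReal_le_of_le_ofReal (by positivity) key

end Workhorse


set_option maxHeartbeats 1600000 in
/-- for `s < 1/2` and `α ∈ (2s,1]`, the Pucci operators map `C^{0,α}(ℝ^d)` to
`C^{0,α-2s}(ℝ^d)` with a universal seminorm bound. -/
theorem statement6 (d : ℕ) (hd : 1 ≤ d) (s Lam α : ℝ) (hs : s ∈ Ioo (0:ℝ) 1)
    (hs2 : s < 1 / 2) (hLam : 0 < Lam) (hα : α ∈ Ioc (2 * s) 1) :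
    ∃ C : ℝ, 0 < C ∧ ∀ lam ρ : ℝ, 0 < lam → lam ≤ Lam → 0 ≤ ρ →
      ∀ φ : Ed d → ℝ, (∃ Cb : ℝ, ∀ x, |φ x| ≤ Cb) →
      ∀ H : ℝ, 0 ≤ H → (∀ x y : Ed d, |φ x - φ y| ≤ H * ‖x - y‖ ^ α) →
        (∀ x : Ed d,
          BddBelow ((fun K => opL d s K φ x) '' KernelClass d s lam Lam ρ) ∧
          BddAbove ((fun K => opL d s K φ x) '' KernelClass d s lam Lam ρ)) ∧
        ∀ x y : Ed d,
          |pucciInf d s lam Lam ρ φ x - pucciInf d s lam Lam ρ φ y| ≤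
            C * H * ‖x - y‖ ^ (α - 2 * s) ∧
          |pucciSup d s lam Lam ρ φ x - pucciSup d s lam Lam ρ φ y| ≤
            C * H * ‖x - y‖ ^ (α - 2 * s) := by
  obtain ⟨hs0, hs1⟩ := hs
  obtain ⟨hα2s, hα1⟩ := hα
  have hα0 : 0 < α := lt_trans (by positivity) hα2s
  have hq1 : (2:ℝ) ^ (-(α - 2*s)) < 1 :=
    Real.rpow_lt_one_of_one_lt_of_neg one_lt_two (by linarith)
  have hq2 : (2:ℝ) ^ (-(2*s)) < 1 :=
    Real.rpow_lt_one_of_one_lt_of_neg one_lt_two (by linarith)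
  have hq1' : (0:ℝ) < (1 - 2 ^ (-(α - 2*s)))⁻¹ := by rw [inv_pos]; linarith
  have hq2' : (0:ℝ) < (1 - 2 ^ (-(2*s)))⁻¹ := by rw [inv_pos]; linarith
  set C₁ : ℝ := Lam * 2 ^ (2*s) * (1 - 2 ^ (-(α - 2*s)))⁻¹ with hC₁def
  set C₂ : ℝ := Lam * (1 - 2 ^ (-(2*s)))⁻¹ with hC₂def
  have hC₁ : 0 < C₁ := mul_pos (mul_pos hLam (Real.rpow_pos_of_pos two_pos _)) hq1'
  have hC₂ : 0 < C₂ := mul_pos hLam hq2'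
  have habs : ∀ a b : ℝ, |a - b| ≤ |a| + |b| := fun a b => by
    simpa [sub_eq_add_neg, abs_neg] using abs_add_le a (-b)
  refine ⟨2*(C₁+C₂), by linarith, ?_⟩
  intro lam ρ hlam hlamLam hρ φ hφb H hH hφH
  obtain ⟨Cb, hCb⟩ := hφb
  have hCb0 : 0 ≤ Cb := le_trans (abs_nonneg _) (hCb 0)
  have hφc : Continuous φ := holder_continuous hα0 hφH
  have hLam0 : 0 ≤ Lam := hLam.le
  have hopL : ∀ (K : Ed d → ℝ) (x : Ed d),
      opL d s K φ x = ∫ y, (φ (x + y) - φ x) * K y := by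
    intro K x; unfold opL incr; simp only [if_pos hs2]
  have hpt : ∀ x : Ed d, ∀ K ∈ KernelClass d s lam Lam ρ,
      Integrable (fun y => (φ (x + y) - φ x) * K y) ∧
      |opL d s K φ x| ≤ H * C₁ + (2*Cb) * C₂ := by
    intro x K hK
    have hψm : Measurable (fun y : Ed d => φ (x + y) - φ x) :=
      ((hφc.comp (continuous_const.add continuous_id)).sub continuous_const).measurable
    have hA : ∀ y : Ed d, |φ (x + y) - φ x| ≤ H * ‖y‖ ^ α := fun y => by
      simpa using hφH (x + y) x
    have hBb : ∀ y : Ed d, |φ (x + y) - φ x| ≤ 2*Cb := fun y =>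
      le_trans (habs _ _) (by linarith [hCb (x+y), hCb x])
    obtain ⟨hint, hbd⟩ := opL_abs_bound hK hs0 hLam0 hα2s hψm hH (by linarith) hA hBb one_pos
    refine ⟨hint, ?_⟩
    rw [hopL K x]
    calc |∫ y, (φ (x + y) - φ x) * K y| ≤
        H * C₁ * (1:ℝ) ^ (α - 2*s) + (2*Cb) * C₂ * (1:ℝ) ^ (-(2*s)) := hbd
      _ = H * C₁ + (2*Cb) * C₂ := by rw [Real.one_rpow, Real.one_rpow]; ring
  have hdiff : ∀ x y : Ed d, ∀ K ∈ KernelClass d s lam Lam ρ,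
      |opL d s K φ x - opL d s K φ y| ≤ 2*(C₁+C₂) * H * ‖x - y‖ ^ (α - 2*s) := by
    intro x y K hK
    rcases eq_or_ne x y with rfl | hxy
    · have : (0:ℝ) ≤ 2*(C₁+C₂) * H * ‖x - x‖ ^ (α - 2*s) := by
        have := Real.rpow_nonneg (norm_nonneg (x - x)) (α - 2*s)
        have h2 : (0:ℝ) ≤ 2*(C₁+C₂) * H := by nlinarith
        nlinarith
      simpa using this
    · have hr : 0 < ‖x - y‖ := by rwa [norm_pos_iff, sub_ne_zero]
      have hψm : Measurable (fun z : Ed d => (φ (x + z) - φ x) - (φ (y + z) - φ y)) :=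
        (((hφc.comp (continuous_const.add continuous_id)).sub continuous_const).sub
          ((hφc.comp (continuous_const.add continuous_id)).sub continuous_const)).measurable
      have hA : ∀ z : Ed d, |(φ (x + z) - φ x) - (φ (y + z) - φ y)| ≤ (2*H) * ‖z‖ ^ α := by
        intro z
        have h1 : |φ (x + z) - φ x| ≤ H * ‖z‖ ^ α := by simpa using hφH (x + z) x
        have h2 : |φ (y + z) - φ y| ≤ H * ‖z‖ ^ α := by simpa using hφH (y + z) y
        refine le_trans (habs _ _) (by linarith)
      have hB : ∀ z : Ed d, |(φ (x + z) - φ x) - (φ (y + z) - φ y)| ≤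
          (2*H) * ‖x - y‖ ^ α := by
        intro z
        have h1 : |φ (x + z) - φ (y + z)| ≤ H * ‖x - y‖ ^ α := by
          have := hφH (x + z) (y + z)
          rwa [add_sub_add_right_eq_sub] at this
        have h2 : |φ x - φ y| ≤ H * ‖x - y‖ ^ α := hφH x y
        have hid : (φ (x + z) - φ x) - (φ (y + z) - φ y) =
            (φ (x + z) - φ (y + z)) - (φ x - φ y) := by ring
        rw [hid]
        refine le_trans (habs _ _) (by linarith)
      obtain ⟨hint, hbd⟩ := opL_abs_bound hK hs0 hLam0 hα2s hψm
        (A := 2*H) (B := (2*H) * ‖x - y‖ ^ α) (by linarith) (by positivity) hA hB hr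
      have hsub : opL d s K φ x - opL d s K φ y =
          ∫ z, ((φ (x + z) - φ x) - (φ (y + z) - φ y)) * K z := by
        rw [hopL K x, hopL K y, ← integral_sub (hpt x K hK).1 (hpt y K hK).1]
        congr 1; funext z; ring
      rw [hsub]
      have hrr : ‖x - y‖ ^ α * ‖x - y‖ ^ (-(2*s)) = ‖x - y‖ ^ (α - 2*s) := by
        rw [← Real.rpow_add hr]; ring_nf
      calc |∫ z, ((φ (x + z) - φ x) - (φ (y + z) - φ y)) * K z|
          ≤ (2*H) * C₁ * ‖x - y‖ ^ (α - 2*s)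
            + ((2*H) * ‖x - y‖ ^ α) * C₂ * ‖x - y‖ ^ (-(2*s)) := hbd
        _ = (2*H) * C₁ * ‖x - y‖ ^ (α - 2*s)
            + (2*H) * C₂ * (‖x - y‖ ^ α * ‖x - y‖ ^ (-(2*s))) := by ring
        _ = 2*(C₁+C₂) * H * ‖x - y‖ ^ (α - 2*s) := by rw [hrr]; ring
  have hbdd : ∀ x : Ed d,
      BddBelow ((fun K => opL d s K φ x) '' KernelClass d s lam Lam ρ) ∧
      BddAbove ((fun K => opL d s K φ x) '' KernelClass d s lam Lam ρ) := by
    intro x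
    constructor
    · refine ⟨-(H * C₁ + (2*Cb) * C₂), ?_⟩
      rintro v ⟨K, hK, rfl⟩
      exact neg_le_of_abs_le (hpt x K hK).2
    · refine ⟨H * C₁ + (2*Cb) * C₂, ?_⟩
      rintro v ⟨K, hK, rfl⟩
      exact le_of_abs_le (hpt x K hK).2
  refine ⟨hbdd, ?_⟩
  intro x y
  have hM'0 : 0 ≤ 2*(C₁+C₂) * H * ‖x - y‖ ^ (α - 2 * s) := by
    have h1 := Real.rpow_nonneg (norm_nonneg (x - y)) (α - 2*s)
    have h2 : (0:ℝ) ≤ 2*(C₁+C₂) * H := by nlinarith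
    nlinarith
  rcases eq_empty_or_nonempty (KernelClass d s lam Lam ρ) with hemp | hne
  · constructor <;>
      · simp only [pucciInf, pucciSup, hemp, image_empty, Real.sInf_empty, Real.sSup_empty,
          sub_self, abs_zero]
        exact hM'0
  · have hInf : ∀ u v : Ed d, pucciInf d s lam Lam ρ φ u ≤
        pucciInf d s lam Lam ρ φ v + 2*(C₁+C₂) * H * ‖u - v‖ ^ (α - 2*s) := by
      intro u v
      have hSv : ((fun K => opL d s K φ v) '' KernelClass d s lam Lam ρ).Nonempty :=
        hne.image _
      simp only [pucciInf]
      rw [← sub_le_iff_le_add]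
      refine le_csInf hSv ?_
      rintro b ⟨K, hK, rfl⟩
      have h1 : sInf ((fun K => opL d s K φ u) '' KernelClass d s lam Lam ρ) ≤
          opL d s K φ u := csInf_le (hbdd u).1 ⟨K, hK, rfl⟩
      have h2 := (abs_le.mp (hdiff u v K hK)).2
      simp only
      linarith
    have hSup : ∀ u v : Ed d, pucciSup d s lam Lam ρ φ u ≤
        pucciSup d s lam Lam ρ φ v + 2*(C₁+C₂) * H * ‖u - v‖ ^ (α - 2*s) := by
      intro u v
      have hSu : ((fun K => opL d s K φ u) '' KernelClass d s lam Lam ρ).Nonempty :=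
        hne.image _
      simp only [pucciSup]
      refine csSup_le hSu ?_
      rintro b ⟨K, hK, rfl⟩
      have h1 : opL d s K φ v ≤
          sSup ((fun K => opL d s K φ v) '' KernelClass d s lam Lam ρ) :=
        le_csSup (hbdd v).2 ⟨K, hK, rfl⟩
      have h2 := (abs_le.mp (hdiff u v K hK)).2
      simp only
      linarith
    have hnorm : ‖y - x‖ = ‖x - y‖ := norm_sub_rev y x
    constructor
    · rw [abs_sub_le_iff]
      constructor
      · have := hInf x y; linarith
      · have := hInf y x; rw [hnorm] at this; linarith
    · rw [abs_sub_le_iff]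
      constructor
      · have := hSup x y; linarith
      · have := hSup y x; rw [hnorm] at this; linarith
end
end

section
/- Assume s > 1/2 and let α ∈ (2s−1, 1]. Then there exists a constant C > 0 depending only on d, s, Λ and α such that for every φ ∈ C^1(ℝ^d) with φ and ∇φ bounded and with finite seminorm [φ]_{C^{1,α}(ℝ^d)} = [∇φ]_{C^{0,α}(ℝ^d)}, the values M_ρ^± φ(x) are finite for every x ∈ ℝ^d and for all x, y ∈ ℝ^d one has |M_ρ^± φ(x) − M_ρ^± φ(y)| ≤ C [φ]_{C^{1,α}(ℝ^d)} |x−y|^{1+α−2s} (both for M_ρ^+ and for M_ρ^−). -/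
open MeasureTheory Metric Set
open scoped Classical

noncomputable section

section AuxLemmas

lemma abs_csInf_sub {X : Type*} {T : Set X} {F G : X → ℝ} {M : ℝ} (hM : 0 ≤ M)
    (hF : BddBelow (F '' T)) (hG : BddBelow (G '' T)) (h : ∀ k ∈ T, |F k - G k| ≤ M) :
    |sInf (F '' T) - sInf (G '' T)| ≤ M := by
  rcases T.eq_empty_or_nonempty with rfl | hT
  · simpa using hM
  · rw [abs_le]
    constructor
    · have : sInf (G '' T) - M ≤ sInf (F '' T) := by
        apply le_csInf (hT.image F)
        rintro b ⟨k, hk, rfl⟩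
        have := (abs_le.1 (h k hk)).1
        have h2 : sInf (G '' T) ≤ G k := csInf_le hG ⟨k, hk, rfl⟩
        linarith
      linarith
    · have : sInf (F '' T) - M ≤ sInf (G '' T) := by
        apply le_csInf (hT.image G)
        rintro b ⟨k, hk, rfl⟩
        have := (abs_le.1 (h k hk)).2
        have h2 : sInf (F '' T) ≤ F k := csInf_le hF ⟨k, hk, rfl⟩
        linarith
      linarith

lemma abs_csSup_sub {X : Type*} {T : Set X} {F G : X → ℝ} {M : ℝ} (hM : 0 ≤ M)
    (hF : BddAbove (F '' T)) (hG : BddAbove (G '' T)) (h : ∀ k ∈ T, |F k - G k| ≤ M) :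
    |sSup (F '' T) - sSup (G '' T)| ≤ M := by
  rcases T.eq_empty_or_nonempty with rfl | hT
  · simpa using hM
  · rw [abs_le]
    constructor
    · have : sSup (G '' T) ≤ sSup (F '' T) + M := by
        apply csSup_le (hT.image G)
        rintro b ⟨k, hk, rfl⟩
        have := (abs_le.1 (h k hk)).1
        have h2 : F k ≤ sSup (F '' T) := le_csSup hF ⟨k, hk, rfl⟩
        linarith
      linarith
    · have : sSup (F '' T) ≤ sSup (G '' T) + M := by
        apply csSup_le (hT.image F)
        rintro b ⟨k, hk, rfl⟩
        have := (abs_le.1 (h k hk)).2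
        have h2 : G k ≤ sSup (G '' T) := le_csSup hG ⟨k, hk, rfl⟩
        linarith
      linarith

/-- Taylor bound: `|φ(x+y) - φ(x) - Dφ(x)y| ≤ H ‖y‖^{1+α}`. -/

lemma taylor_bound {d : ℕ} {φ : Ed d → ℝ} (hφ : ContDiff ℝ 1 φ) {H α : ℝ} (hα : 0 < α)
    (hH0 : 0 ≤ H)
    (hH : ∀ x y : Ed d, ‖fderiv ℝ φ x - fderiv ℝ φ y‖ ≤ H * ‖x - y‖ ^ α)
    (x y : Ed d) : |φ (x + y) - φ x - fderiv ℝ φ x y| ≤ H * ‖y‖ ^ (1 + α) := by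
  rcases eq_or_ne y 0 with rfl | hy
  · simp [Real.zero_rpow (by positivity : (1:ℝ) + α ≠ 0)]
  · set ψ : Ed d → ℝ := fun z => φ z - fderiv ℝ φ x z with hψ
    have hder : ∀ z : Ed d, HasFDerivAt ψ (fderiv ℝ φ z - fderiv ℝ φ x) z := fun z =>
      ((hφ.differentiable one_ne_zero z).hasFDerivAt).sub (fderiv ℝ φ x).hasFDerivAt
    have hconv : Convex ℝ (closedBall x ‖y‖) := convex_closedBall _ _
    have hbound : ∀ z ∈ closedBall x ‖y‖, ‖fderiv ℝ φ z - fderiv ℝ φ x‖ ≤ H * ‖y‖ ^ α := by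
      intro z hz
      refine (hH z x).trans ?_
      have h1 : ‖z - x‖ ≤ ‖y‖ := mem_closedBall_iff_norm.1 hz
      exact mul_le_mul_of_nonneg_left (Real.rpow_le_rpow (norm_nonneg _) h1 hα.le) hH0
    have key := hconv.norm_image_sub_le_of_norm_hasFDerivWithin_le
      (fun z hz => (hder z).hasFDerivWithinAt) hbound
      (mem_closedBall_self (norm_nonneg y))
      (by simpa [mem_closedBall_iff_norm] using le_refl ‖y‖ : x + y ∈ closedBall x ‖y‖)
    have hval : ψ (x + y) - ψ x = φ (x + y) - φ x - fderiv ℝ φ x y := by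
      simp only [hψ]
      have : (fderiv ℝ φ x) (x + y) = fderiv ℝ φ x x + fderiv ℝ φ x y := by
        rw [← map_add]
      rw [this]; ring
    rw [← Real.norm_eq_abs, ← hval]
    calc ‖ψ (x + y) - ψ x‖ ≤ H * ‖y‖ ^ α * ‖x + y - x‖ := key
      _ = H * ‖y‖ ^ (1 + α) := by
        rw [add_sub_cancel_left]
        rw [add_comm (1:ℝ) α, Real.rpow_add_one (norm_ne_zero_iff.2 hy)]
        ring

lemma cross_bound {d : ℕ} {φ : Ed d → ℝ} (hφ : ContDiff ℝ 1 φ) {H α : ℝ} (hα : 0 < α)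
    (hH0 : 0 ≤ H)
    (hH : ∀ x y : Ed d, ‖fderiv ℝ φ x - fderiv ℝ φ y‖ ≤ H * ‖x - y‖ ^ α)
    (x z y : Ed d) :
    |(φ (x + y) - φ x - fderiv ℝ φ x y) - (φ (z + y) - φ z - fderiv ℝ φ z y)| ≤
      2 * H * ‖x - z‖ ^ α * ‖y‖ := by
  set c : ℝ := fderiv ℝ φ x y - fderiv ℝ φ z y with hc
  set G : ℝ → ℝ := fun t => φ (x + t • y) - φ (z + t • y) - t * c with hG
  have hderG : ∀ t : ℝ, HasDerivAt G
      (fderiv ℝ φ (x + t • y) y - fderiv ℝ φ (z + t • y) y - c) t := by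
    intro t
    have hline : ∀ w : Ed d, HasDerivAt (fun t : ℝ => w + t • y) y t := by
      intro w
      simpa using ((hasDerivAt_id t).smul_const y).const_add w
    have h1 : HasDerivAt (fun t : ℝ => φ (x + t • y)) (fderiv ℝ φ (x + t • y) y) t :=
      ((hφ.differentiable one_ne_zero _).hasFDerivAt).comp_hasDerivAt t (hline x)
    have h2 : HasDerivAt (fun t : ℝ => φ (z + t • y)) (fderiv ℝ φ (z + t • y) y) t :=
      ((hφ.differentiable one_ne_zero _).hasFDerivAt).comp_hasDerivAt t (hline z)
    have h3 : HasDerivAt (fun t : ℝ => t * c) c t := by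
      simpa using (hasDerivAt_id t).mul_const c
    exact (h1.sub h2).sub h3
  have hbound : ∀ t ∈ Icc (0:ℝ) 1,
      ‖fderiv ℝ φ (x + t • y) y - fderiv ℝ φ (z + t • y) y - c‖ ≤ 2 * H * ‖x - z‖ ^ α * ‖y‖ := by
    intro t _
    have e1 : ‖fderiv ℝ φ (x + t • y) y - fderiv ℝ φ (z + t • y) y‖ ≤ H * ‖x - z‖ ^ α * ‖y‖ := by
      have := (fderiv ℝ φ (x + t • y) - fderiv ℝ φ (z + t • y)).le_opNorm y
      have h2 := hH (x + t • y) (z + t • y)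
      have h3 : x + t • y - (z + t • y) = x - z := by abel
      rw [h3] at h2
      simp only [ContinuousLinearMap.sub_apply] at this
      calc ‖fderiv ℝ φ (x + t • y) y - fderiv ℝ φ (z + t • y) y‖ ≤
          ‖fderiv ℝ φ (x + t • y) - fderiv ℝ φ (z + t • y)‖ * ‖y‖ := this
        _ ≤ H * ‖x - z‖ ^ α * ‖y‖ :=
          mul_le_mul_of_nonneg_right h2 (norm_nonneg y)
    have e2 : ‖c‖ ≤ H * ‖x - z‖ ^ α * ‖y‖ := by
      have := (fderiv ℝ φ x - fderiv ℝ φ z).le_opNorm y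
      simp only [ContinuousLinearMap.sub_apply] at this
      calc ‖c‖ ≤ ‖fderiv ℝ φ x - fderiv ℝ φ z‖ * ‖y‖ := this
        _ ≤ H * ‖x - z‖ ^ α * ‖y‖ := mul_le_mul_of_nonneg_right (hH x z) (norm_nonneg y)
    calc ‖fderiv ℝ φ (x + t • y) y - fderiv ℝ φ (z + t • y) y - c‖ ≤
        ‖fderiv ℝ φ (x + t • y) y - fderiv ℝ φ (z + t • y) y‖ + ‖c‖ := norm_sub_le _ _
      _ ≤ 2 * H * ‖x - z‖ ^ α * ‖y‖ := by linarith
  have key := (convex_Icc (0:ℝ) 1).norm_image_sub_le_of_norm_hasDerivWithin_le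
    (fun t ht => (hderG t).hasDerivWithinAt) hbound
    (left_mem_Icc.2 zero_le_one) (right_mem_Icc.2 zero_le_one)
  have hG1 : G 1 - G 0 =
      (φ (x + y) - φ x - fderiv ℝ φ x y) - (φ (z + y) - φ z - fderiv ℝ φ z y) := by
    simp only [hG, hc, one_smul, zero_smul, add_zero, one_mul, zero_mul]
    ring
  rw [← Real.norm_eq_abs, ← hG1]
  simpa using key

lemma annuli_inner {d : ℕ} {s Lam : ℝ} (hs : 0 < s) (hLam : 0 < Lam) {K : Ed d → ℝ}
    (hKm : Measurable K)
    (hK2 : ∀ r : ℝ, 0 < r →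
      ∫⁻ y in ball (0 : Ed d) (2 * r) \ ball 0 r, ENNReal.ofReal (K y) ≤
        ENNReal.ofReal (Lam * r ^ (-(2 * s))))
    {p : ℝ} (hp : 2 * s < p) {r : ℝ} (hr : 0 < r) :
    ∫⁻ y in ball (0 : Ed d) r, ENNReal.ofReal (‖y‖ ^ p) * ENNReal.ofReal (K y) ≤
      ENNReal.ofReal (Lam * 2 ^ (2 * s) * (1 - (1/2 : ℝ) ^ (p - 2 * s))⁻¹ * r ^ (p - 2 * s)) := by
  have hp0 : 0 < p := lt_trans (by positivity) hp
  set g : ℝ := (1/2 : ℝ) ^ (p - 2 * s) with hgdef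
  have hg0 : 0 < g := Real.rpow_pos_of_pos (by norm_num) _
  have hg1 : g < 1 := by
    apply Real.rpow_lt_one (by norm_num) (by norm_num) (by linarith)
  -- the dyadic annuli
  set S : ℕ → Set (Ed d) := fun k => ball (0 : Ed d) (r * (1/2) ^ k) \ ball 0 (r * (1/2) ^ (k+1))
    with hSdef
  have hSmeas : ∀ k, MeasurableSet (S k) := fun k =>
    (measurableSet_ball).diff measurableSet_ball
  have hdisj : Pairwise (Function.onFun Disjoint S) := by
    apply (pairwise_disjoint_on S).2
    intro i j hij
    apply Set.disjoint_left.2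
    rintro y ⟨hy1, hy2⟩ ⟨hy3, _⟩
    apply hy2
    apply mem_ball_zero_iff.2
    have h1 : ‖y‖ < r * (1/2 : ℝ) ^ j := mem_ball_zero_iff.1 hy3
    have h2 : (1/2 : ℝ) ^ j ≤ (1/2) ^ (i + 1) :=
      pow_le_pow_of_le_one (by norm_num) (by norm_num) hij
    nlinarith
  have hcover : ball (0 : Ed d) r ⊆ {0} ∪ ⋃ k, S k := by
    intro y hy
    rcases eq_or_ne y 0 with rfl | hy0
    · exact Or.inl rfl
    · right
      have hyn : 0 < ‖y‖ := norm_pos_iff.2 hy0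
      have hylt : ‖y‖ < r := mem_ball_zero_iff.1 hy
      have hex : ∃ n : ℕ, r * (1/2 : ℝ) ^ n ≤ ‖y‖ := by
        obtain ⟨n, hn⟩ := exists_pow_lt_of_lt_one (by positivity : (0:ℝ) < ‖y‖ / r)
          (by norm_num : (1/2 : ℝ) < 1)
        exact ⟨n, by rw [mul_comm]; exact (le_div_iff₀ hr).1 hn.le⟩
      have hN := Nat.find_spec hex
      have hN0 : Nat.find hex ≠ 0 := by
        intro h0
        rw [h0] at hN
        simp only [pow_zero, mul_one] at hN
        linarith
      obtain ⟨k, hk⟩ : ∃ k, Nat.find hex = k + 1 :=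
        ⟨Nat.find hex - 1, (Nat.succ_pred_eq_of_pos (Nat.pos_of_ne_zero hN0)).symm⟩
      rw [hk] at hN
      refine mem_iUnion.2 ⟨k, ?_, ?_⟩
      · refine mem_ball_zero_iff.2 (lt_of_not_ge ?_)
        have := Nat.find_min hex (m := k) (by omega)
        exact this
      · exact fun hc => absurd (mem_ball_zero_iff.1 hc) (not_lt.2 hN)
  -- bound on each annulus
  have hterm : ∀ k : ℕ, ∫⁻ y in S k, ENNReal.ofReal (‖y‖ ^ p) * ENNReal.ofReal (K y) ≤
      ENNReal.ofReal ((Lam * 2 ^ (2 * s) * r ^ (p - 2 * s)) * g ^ k) := by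
    intro k
    have hrk : 0 < r * (1/2 : ℝ) ^ (k+1) := by positivity
    have hSk : S k = ball (0 : Ed d) (2 * (r * (1/2) ^ (k+1))) \ ball 0 (r * (1/2) ^ (k+1)) := by
      rw [hSdef]
      congr 2
      rw [pow_succ]
      ring
    have step1 : ∫⁻ y in S k, ENNReal.ofReal (‖y‖ ^ p) * ENNReal.ofReal (K y) ≤
        ∫⁻ y in S k, ENNReal.ofReal ((r * (1/2) ^ k) ^ p) * ENNReal.ofReal (K y) := by
      apply setLIntegral_mono' (hSmeas k)
      intro y hy
      have h1 : ‖y‖ ≤ r * (1/2 : ℝ) ^ k := (mem_ball_zero_iff.1 hy.1).le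
      exact mul_le_mul_left (ENNReal.ofReal_le_ofReal
        (Real.rpow_le_rpow (norm_nonneg _) h1 hp0.le)) _
    have step2 : ∫⁻ y in S k, ENNReal.ofReal ((r * (1/2) ^ k) ^ p) * ENNReal.ofReal (K y) =
        ENNReal.ofReal ((r * (1/2) ^ k) ^ p) * ∫⁻ y in S k, ENNReal.ofReal (K y) :=
      lintegral_const_mul _ hKm.ennreal_ofReal
    have step3 : ∫⁻ y in S k, ENNReal.ofReal (K y) ≤
        ENNReal.ofReal (Lam * (r * (1/2) ^ (k+1)) ^ (-(2 * s))) := by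
      rw [hSk]; exact hK2 _ hrk
    have halg : (r * (1/2 : ℝ) ^ k) ^ p * (Lam * (r * (1/2) ^ (k+1)) ^ (-(2 * s))) =
        (Lam * 2 ^ (2 * s) * r ^ (p - 2 * s)) * g ^ k := by
      have hhalf : (0:ℝ) < (1/2 : ℝ) ^ k := by positivity
      have e1 : (r * (1/2 : ℝ) ^ k) ^ p = r ^ p * ((1/2 : ℝ) ^ k) ^ p :=
        Real.mul_rpow hr.le hhalf.le
      have e2 : (r * (1/2 : ℝ) ^ (k+1)) ^ (-(2*s)) =
          r ^ (-(2*s)) * ((1/2:ℝ) ^ k) ^ (-(2*s)) * (1/2 : ℝ) ^ (-(2*s)) := by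
        rw [pow_succ, show r * ((1/2:ℝ) ^ k * (1/2)) = r * (1/2)^k * (1/2) by ring,
          Real.mul_rpow (by positivity) (by norm_num),
          Real.mul_rpow hr.le hhalf.le]
      have e3 : ((1/2:ℝ) ^ k) ^ p * ((1/2:ℝ) ^ k) ^ (-(2*s)) = g ^ k := by
        rw [← Real.rpow_natCast (1/2 : ℝ) k, ← Real.rpow_mul (by norm_num),
          ← Real.rpow_mul (by norm_num), ← Real.rpow_add (by norm_num), hgdef,
          ← Real.rpow_natCast ((1/2:ℝ) ^ (p - 2*s)) k, ← Real.rpow_mul (by norm_num)]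
        ring_nf
      have e4 : (1/2 : ℝ) ^ (-(2*s)) = 2 ^ (2*s) := by
        rw [show (1/2 : ℝ) = 2⁻¹ by norm_num, ← Real.rpow_neg_one,
          ← Real.rpow_mul (by norm_num)]
        norm_num
      have e5 : r ^ p * r ^ (-(2*s)) = r ^ (p - 2*s) := by
        rw [← Real.rpow_add hr]; ring_nf
      calc (r * (1/2 : ℝ) ^ k) ^ p * (Lam * (r * (1/2) ^ (k+1)) ^ (-(2 * s)))
          = Lam * (r ^ p * r ^ (-(2*s))) * (((1/2:ℝ) ^ k) ^ p * ((1/2:ℝ) ^ k) ^ (-(2*s)))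
            * (1/2 : ℝ) ^ (-(2*s)) := by rw [e1, e2]; ring
        _ = (Lam * 2 ^ (2 * s) * r ^ (p - 2 * s)) * g ^ k := by rw [e3, e4, e5]; ring
    calc ∫⁻ y in S k, ENNReal.ofReal (‖y‖ ^ p) * ENNReal.ofReal (K y)
        ≤ ENNReal.ofReal ((r * (1/2) ^ k) ^ p) * ∫⁻ y in S k, ENNReal.ofReal (K y) := by
          rw [← step2]; exact step1
      _ ≤ ENNReal.ofReal ((r * (1/2) ^ k) ^ p) *
          ENNReal.ofReal (Lam * (r * (1/2) ^ (k+1)) ^ (-(2 * s))) :=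
          mul_le_mul_right step3 _
      _ = ENNReal.ofReal ((Lam * 2 ^ (2 * s) * r ^ (p - 2 * s)) * g ^ k) := by
          rw [← ENNReal.ofReal_mul (by positivity), halg]
  -- put together
  have hzero : ∫⁻ y in ({0} : Set (Ed d)), ENNReal.ofReal (‖y‖ ^ p) * ENNReal.ofReal (K y) = 0 := by
    have : ∀ y ∈ ({0} : Set (Ed d)),
        ENNReal.ofReal (‖y‖ ^ p) * ENNReal.ofReal (K y) ≤ 0 := by
      rintro y rfl
      simp [Real.zero_rpow hp0.ne']
    exact le_zero_iff.1 ((setLIntegral_mono' (measurableSet_singleton 0) this).trans_eq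
      lintegral_zero)
  have hsum : ∑' k, ENNReal.ofReal ((Lam * 2 ^ (2 * s) * r ^ (p - 2 * s)) * g ^ k) =
      ENNReal.ofReal (Lam * 2 ^ (2 * s) * (1 - g)⁻¹ * r ^ (p - 2 * s)) := by
    have hc : (0:ℝ) ≤ Lam * 2 ^ (2 * s) * r ^ (p - 2 * s) := by positivity
    calc ∑' k, ENNReal.ofReal ((Lam * 2 ^ (2 * s) * r ^ (p - 2 * s)) * g ^ k)
        = ∑' k, ENNReal.ofReal (Lam * 2 ^ (2 * s) * r ^ (p - 2 * s)) *
            (ENNReal.ofReal g) ^ k := by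
          congr 1; funext k
          rw [← ENNReal.ofReal_pow hg0.le, ← ENNReal.ofReal_mul hc]
      _ = ENNReal.ofReal (Lam * 2 ^ (2 * s) * r ^ (p - 2 * s)) * (1 - ENNReal.ofReal g)⁻¹ := by
          rw [ENNReal.tsum_mul_left, ENNReal.tsum_geometric]
      _ = ENNReal.ofReal (Lam * 2 ^ (2 * s) * (1 - g)⁻¹ * r ^ (p - 2 * s)) := by
          rw [← ENNReal.ofReal_one, ← ENNReal.ofReal_sub _ hg0.le,
            ← ENNReal.ofReal_inv_of_pos (by linarith), ← ENNReal.ofReal_mul hc]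
          congr 1; ring
  calc ∫⁻ y in ball (0 : Ed d) r, ENNReal.ofReal (‖y‖ ^ p) * ENNReal.ofReal (K y)
      ≤ ∫⁻ y in ({0} : Set (Ed d)) ∪ ⋃ k, S k,
          ENNReal.ofReal (‖y‖ ^ p) * ENNReal.ofReal (K y) :=
        lintegral_mono_set hcover
    _ ≤ (∫⁻ y in ({0} : Set (Ed d)), ENNReal.ofReal (‖y‖ ^ p) * ENNReal.ofReal (K y)) +
        ∫⁻ y in ⋃ k, S k, ENNReal.ofReal (‖y‖ ^ p) * ENNReal.ofReal (K y) :=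
        lintegral_union_le _ _ _
    _ = ∑' k, ∫⁻ y in S k, ENNReal.ofReal (‖y‖ ^ p) * ENNReal.ofReal (K y) := by
        rw [hzero, zero_add, lintegral_iUnion hSmeas hdisj]
    _ ≤ ∑' k, ENNReal.ofReal ((Lam * 2 ^ (2 * s) * r ^ (p - 2 * s)) * g ^ k) :=
        ENNReal.tsum_le_tsum hterm
    _ = ENNReal.ofReal (Lam * 2 ^ (2 * s) * (1 - g)⁻¹ * r ^ (p - 2 * s)) := hsum

lemma annuli_outer {d : ℕ} {s Lam : ℝ} (hs : 0 < s) (hLam : 0 < Lam) {K : Ed d → ℝ}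
    (hKm : Measurable K)
    (hK2 : ∀ r : ℝ, 0 < r →
      ∫⁻ y in ball (0 : Ed d) (2 * r) \ ball 0 r, ENNReal.ofReal (K y) ≤
        ENNReal.ofReal (Lam * r ^ (-(2 * s))))
    {q : ℝ} (hq0 : 0 ≤ q) (hq : q < 2 * s) {r : ℝ} (hr : 0 < r) :
    ∫⁻ y in (ball (0 : Ed d) r)ᶜ, ENNReal.ofReal (‖y‖ ^ q) * ENNReal.ofReal (K y) ≤
      ENNReal.ofReal (Lam * 2 ^ q * (1 - (2 : ℝ) ^ (q - 2 * s))⁻¹ * r ^ (q - 2 * s)) := by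
  set g : ℝ := (2 : ℝ) ^ (q - 2 * s) with hgdef
  have hg0 : 0 < g := Real.rpow_pos_of_pos (by norm_num) _
  have hg1 : g < 1 := by
    apply Real.rpow_lt_one_of_one_lt_of_neg (by norm_num) (by linarith)
  set S : ℕ → Set (Ed d) := fun k => ball (0 : Ed d) (r * 2 ^ (k+1)) \ ball 0 (r * 2 ^ k)
    with hSdef
  have hSmeas : ∀ k, MeasurableSet (S k) := fun k =>
    (measurableSet_ball).diff measurableSet_ball
  have hdisj : Pairwise (Function.onFun Disjoint S) := by
    apply (pairwise_disjoint_on S).2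
    intro i j hij
    apply Set.disjoint_left.2
    rintro y ⟨hy1, _⟩ ⟨_, hy4⟩
    apply hy4
    apply mem_ball_zero_iff.2
    have h1 : ‖y‖ < r * (2:ℝ) ^ (i+1) := mem_ball_zero_iff.1 hy1
    have h2 : (2:ℝ) ^ (i+1) ≤ (2:ℝ) ^ j := pow_le_pow_right₀ (by norm_num) hij
    nlinarith
  have hcover : (ball (0 : Ed d) r)ᶜ ⊆ ⋃ k, S k := by
    intro y hy
    have hyr : r ≤ ‖y‖ := by
      have := mem_ball_zero_iff.not.1 hy
      linarith [not_lt.1 this]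
    have hex : ∃ n : ℕ, ‖y‖ < r * 2 ^ n := by
      obtain ⟨n, hn⟩ := pow_unbounded_of_one_lt (‖y‖ / r) (by norm_num : (1:ℝ) < 2)
      exact ⟨n, by rw [mul_comm]; exact (div_lt_iff₀ hr).1 hn⟩
    have hN := Nat.find_spec hex
    have hN0 : Nat.find hex ≠ 0 := by
      intro h0
      rw [h0] at hN
      simp only [pow_zero, mul_one] at hN
      linarith
    obtain ⟨k, hk⟩ : ∃ k, Nat.find hex = k + 1 :=
      ⟨Nat.find hex - 1, (Nat.succ_pred_eq_of_pos (Nat.pos_of_ne_zero hN0)).symm⟩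
    rw [hk] at hN
    refine mem_iUnion.2 ⟨k, mem_ball_zero_iff.2 hN, ?_⟩
    intro hc
    exact Nat.find_min hex (m := k) (by omega) (mem_ball_zero_iff.1 hc)
  have hterm : ∀ k : ℕ, ∫⁻ y in S k, ENNReal.ofReal (‖y‖ ^ q) * ENNReal.ofReal (K y) ≤
      ENNReal.ofReal ((Lam * 2 ^ q * r ^ (q - 2 * s)) * g ^ k) := by
    intro k
    have hrk : 0 < r * (2:ℝ) ^ k := by positivity
    have hSk : S k = ball (0 : Ed d) (2 * (r * 2 ^ k)) \ ball 0 (r * 2 ^ k) := by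
      rw [hSdef]
      simp only []
      congr 1
      rw [pow_succ]; ring_nf
    have step1 : ∫⁻ y in S k, ENNReal.ofReal (‖y‖ ^ q) * ENNReal.ofReal (K y) ≤
        ∫⁻ y in S k, ENNReal.ofReal ((r * 2 ^ (k+1)) ^ q) * ENNReal.ofReal (K y) := by
      apply setLIntegral_mono' (hSmeas k)
      intro y hy
      have h1 : ‖y‖ ≤ r * (2:ℝ) ^ (k+1) := (mem_ball_zero_iff.1 hy.1).le
      exact mul_le_mul_left (ENNReal.ofReal_le_ofReal
        (Real.rpow_le_rpow (norm_nonneg _) h1 hq0)) _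
    have step2 : ∫⁻ y in S k, ENNReal.ofReal ((r * 2 ^ (k+1)) ^ q) * ENNReal.ofReal (K y) =
        ENNReal.ofReal ((r * 2 ^ (k+1)) ^ q) * ∫⁻ y in S k, ENNReal.ofReal (K y) :=
      lintegral_const_mul _ hKm.ennreal_ofReal
    have step3 : ∫⁻ y in S k, ENNReal.ofReal (K y) ≤
        ENNReal.ofReal (Lam * (r * 2 ^ k) ^ (-(2 * s))) := by
      rw [hSk]; exact hK2 _ hrk
    have halg : (r * (2:ℝ) ^ (k+1)) ^ q * (Lam * (r * 2 ^ k) ^ (-(2 * s))) =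
        (Lam * 2 ^ q * r ^ (q - 2 * s)) * g ^ k := by
      have h2k : (0:ℝ) < (2:ℝ) ^ k := by positivity
      have e1 : (r * (2:ℝ) ^ (k+1)) ^ q = r ^ q * ((2:ℝ) ^ k) ^ q * (2:ℝ) ^ q := by
        rw [pow_succ, show r * ((2:ℝ) ^ k * 2) = r * 2 ^ k * 2 by ring,
          Real.mul_rpow (by positivity) (by norm_num), Real.mul_rpow hr.le h2k.le]
      have e2 : (r * (2:ℝ) ^ k) ^ (-(2*s)) = r ^ (-(2*s)) * ((2:ℝ) ^ k) ^ (-(2*s)) :=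
        Real.mul_rpow hr.le h2k.le
      have e3 : ((2:ℝ) ^ k) ^ q * ((2:ℝ) ^ k) ^ (-(2*s)) = g ^ k := by
        rw [← Real.rpow_natCast (2:ℝ) k, ← Real.rpow_mul (by norm_num),
          ← Real.rpow_mul (by norm_num), ← Real.rpow_add (by norm_num), hgdef,
          ← Real.rpow_natCast ((2:ℝ) ^ (q - 2*s)) k, ← Real.rpow_mul (by norm_num)]
        ring_nf
      have e5 : r ^ q * r ^ (-(2*s)) = r ^ (q - 2*s) := by
        rw [← Real.rpow_add hr]; ring_nf
      calc (r * (2:ℝ) ^ (k+1)) ^ q * (Lam * (r * 2 ^ k) ^ (-(2 * s)))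
          = Lam * (r ^ q * r ^ (-(2*s))) * (((2:ℝ) ^ k) ^ q * ((2:ℝ) ^ k) ^ (-(2*s)))
            * (2:ℝ) ^ q := by rw [e1, e2]; ring
        _ = (Lam * 2 ^ q * r ^ (q - 2 * s)) * g ^ k := by rw [e3, e5]; ring
    calc ∫⁻ y in S k, ENNReal.ofReal (‖y‖ ^ q) * ENNReal.ofReal (K y)
        ≤ ENNReal.ofReal ((r * 2 ^ (k+1)) ^ q) * ∫⁻ y in S k, ENNReal.ofReal (K y) := by
          rw [← step2]; exact step1
      _ ≤ ENNReal.ofReal ((r * 2 ^ (k+1)) ^ q) *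
          ENNReal.ofReal (Lam * (r * 2 ^ k) ^ (-(2 * s))) := mul_le_mul_right step3 _
      _ = ENNReal.ofReal ((Lam * 2 ^ q * r ^ (q - 2 * s)) * g ^ k) := by
          rw [← ENNReal.ofReal_mul (by positivity), halg]
  have hsum : ∑' k, ENNReal.ofReal ((Lam * 2 ^ q * r ^ (q - 2 * s)) * g ^ k) =
      ENNReal.ofReal (Lam * 2 ^ q * (1 - g)⁻¹ * r ^ (q - 2 * s)) := by
    have hc : (0:ℝ) ≤ Lam * 2 ^ q * r ^ (q - 2 * s) := by positivity
    calc ∑' k, ENNReal.ofReal ((Lam * 2 ^ q * r ^ (q - 2 * s)) * g ^ k)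
        = ∑' k, ENNReal.ofReal (Lam * 2 ^ q * r ^ (q - 2 * s)) * (ENNReal.ofReal g) ^ k := by
          congr 1; funext k
          rw [← ENNReal.ofReal_pow hg0.le, ← ENNReal.ofReal_mul hc]
      _ = ENNReal.ofReal (Lam * 2 ^ q * r ^ (q - 2 * s)) * (1 - ENNReal.ofReal g)⁻¹ := by
          rw [ENNReal.tsum_mul_left, ENNReal.tsum_geometric]
      _ = ENNReal.ofReal (Lam * 2 ^ q * (1 - g)⁻¹ * r ^ (q - 2 * s)) := by
          rw [← ENNReal.ofReal_one, ← ENNReal.ofReal_sub _ hg0.le,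
            ← ENNReal.ofReal_inv_of_pos (by linarith), ← ENNReal.ofReal_mul hc]
          congr 1; ring
  calc ∫⁻ y in (ball (0 : Ed d) r)ᶜ, ENNReal.ofReal (‖y‖ ^ q) * ENNReal.ofReal (K y)
      ≤ ∫⁻ y in ⋃ k, S k, ENNReal.ofReal (‖y‖ ^ q) * ENNReal.ofReal (K y) :=
        lintegral_mono_set hcover
    _ = ∑' k, ∫⁻ y in S k, ENNReal.ofReal (‖y‖ ^ q) * ENNReal.ofReal (K y) :=
        lintegral_iUnion hSmeas hdisj _
    _ ≤ ∑' k, ENNReal.ofReal ((Lam * 2 ^ q * r ^ (q - 2 * s)) * g ^ k) :=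
        ENNReal.tsum_le_tsum hterm
    _ = ENNReal.ofReal (Lam * 2 ^ q * (1 - g)⁻¹ * r ^ (q - 2 * s)) := hsum

lemma master_bound {d : ℕ} {s Lam : ℝ} (hs : 0 < s) (hLam : 0 < Lam) {K : Ed d → ℝ}
    (hKm : Measurable K) (hK0 : ∀ y, 0 ≤ K y)
    (hK2 : ∀ r : ℝ, 0 < r →
      ∫⁻ y in ball (0 : Ed d) (2 * r) \ ball 0 r, ENNReal.ofReal (K y) ≤
        ENNReal.ofReal (Lam * r ^ (-(2 * s))))
    {f : Ed d → ℝ} (hf : Measurable f)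
    {p q A B r : ℝ} (hp : 2 * s < p) (hq0 : 0 ≤ q) (hq : q < 2 * s)
    (hA : 0 ≤ A) (hB : 0 ≤ B) (hr : 0 < r)
    (hin : ∀ y : Ed d, ‖y‖ < r → |f y| ≤ A * ‖y‖ ^ p)
    (hout : ∀ y : Ed d, r ≤ ‖y‖ → |f y| ≤ B * ‖y‖ ^ q) :
    Integrable (fun y => f y * K y) ∧
    |∫ y, f y * K y| ≤
      A * (Lam * 2 ^ (2 * s) * (1 - (1/2 : ℝ) ^ (p - 2 * s))⁻¹ * r ^ (p - 2 * s)) +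
      B * (Lam * 2 ^ q * (1 - (2 : ℝ) ^ (q - 2 * s))⁻¹ * r ^ (q - 2 * s)) := by
  set Cin : ℝ := Lam * 2 ^ (2 * s) * (1 - (1/2 : ℝ) ^ (p - 2 * s))⁻¹ * r ^ (p - 2 * s) with hCin
  set Cout : ℝ := Lam * 2 ^ q * (1 - (2 : ℝ) ^ (q - 2 * s))⁻¹ * r ^ (q - 2 * s) with hCout
  have hCin0 : 0 ≤ Cin := by
    have h1 : (1/2 : ℝ) ^ (p - 2 * s) < 1 :=
      Real.rpow_lt_one (by norm_num) (by norm_num) (by linarith)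
    have h2 : (0:ℝ) ≤ (1 - (1/2 : ℝ) ^ (p - 2 * s))⁻¹ := by
      apply inv_nonneg.2; linarith
    rw [hCin]
    apply mul_nonneg (mul_nonneg (mul_nonneg hLam.le (by positivity)) h2) (by positivity)
  have hCout0 : 0 ≤ Cout := by
    have h1 : (2 : ℝ) ^ (q - 2 * s) < 1 :=
      Real.rpow_lt_one_of_one_lt_of_neg (by norm_num) (by linarith)
    have h2 : (0:ℝ) ≤ (1 - (2 : ℝ) ^ (q - 2 * s))⁻¹ := by
      apply inv_nonneg.2; linarith
    rw [hCout]
    apply mul_nonneg (mul_nonneg (mul_nonneg hLam.le (by positivity)) h2) (by positivity)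
  -- lintegral bound
  have hball : ∫⁻ y in ball (0 : Ed d) r, ENNReal.ofReal |f y * K y| ≤
      ENNReal.ofReal A * ENNReal.ofReal Cin := by
    calc ∫⁻ y in ball (0 : Ed d) r, ENNReal.ofReal |f y * K y|
        ≤ ∫⁻ y in ball (0 : Ed d) r,
            ENNReal.ofReal A * (ENNReal.ofReal (‖y‖ ^ p) * ENNReal.ofReal (K y)) := by
          apply setLIntegral_mono' measurableSet_ball
          intro y hy
          rw [← ENNReal.ofReal_mul (Real.rpow_nonneg (norm_nonneg y) p),
            ← ENNReal.ofReal_mul hA]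
          apply ENNReal.ofReal_le_ofReal
          rw [abs_mul, abs_of_nonneg (hK0 y), ← mul_assoc]
          exact mul_le_mul_of_nonneg_right (hin y (mem_ball_zero_iff.1 hy)) (hK0 y)
      _ = ENNReal.ofReal A *
          ∫⁻ y in ball (0 : Ed d) r, ENNReal.ofReal (‖y‖ ^ p) * ENNReal.ofReal (K y) :=
          lintegral_const_mul _ (by
            exact ((measurable_norm.pow_const _ |>.ennreal_ofReal).mul hKm.ennreal_ofReal))
      _ ≤ ENNReal.ofReal A * ENNReal.ofReal Cin :=
          mul_le_mul_right (annuli_inner hs hLam hKm hK2 hp hr) _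
  have hcompl : ∫⁻ y in (ball (0 : Ed d) r)ᶜ, ENNReal.ofReal |f y * K y| ≤
      ENNReal.ofReal B * ENNReal.ofReal Cout := by
    calc ∫⁻ y in (ball (0 : Ed d) r)ᶜ, ENNReal.ofReal |f y * K y|
        ≤ ∫⁻ y in (ball (0 : Ed d) r)ᶜ,
            ENNReal.ofReal B * (ENNReal.ofReal (‖y‖ ^ q) * ENNReal.ofReal (K y)) := by
          apply setLIntegral_mono' measurableSet_ball.compl
          intro y hy
          rw [← ENNReal.ofReal_mul (Real.rpow_nonneg (norm_nonneg y) q),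
            ← ENNReal.ofReal_mul hB]
          apply ENNReal.ofReal_le_ofReal
          rw [abs_mul, abs_of_nonneg (hK0 y), ← mul_assoc]
          have hyr : r ≤ ‖y‖ := not_lt.1 (fun hc => hy (mem_ball_zero_iff.2 hc))
          exact mul_le_mul_of_nonneg_right (hout y hyr) (hK0 y)
      _ = ENNReal.ofReal B *
          ∫⁻ y in (ball (0 : Ed d) r)ᶜ, ENNReal.ofReal (‖y‖ ^ q) * ENNReal.ofReal (K y) :=
          lintegral_const_mul _ (by
            exact ((measurable_norm.pow_const _ |>.ennreal_ofReal).mul hKm.ennreal_ofReal))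
      _ ≤ ENNReal.ofReal B * ENNReal.ofReal Cout :=
          mul_le_mul_right (annuli_outer hs hLam hKm hK2 hq0 hq hr) _
  have htotal : ∫⁻ y, ENNReal.ofReal |f y * K y| ≤ ENNReal.ofReal (A * Cin + B * Cout) := by
    rw [← lintegral_add_compl (fun y => ENNReal.ofReal |f y * K y|)
      (measurableSet_ball (x := (0:Ed d)) (ε := r))]
    calc (∫⁻ y in ball (0 : Ed d) r, ENNReal.ofReal |f y * K y|) +
          ∫⁻ y in (ball (0 : Ed d) r)ᶜ, ENNReal.ofReal |f y * K y|
        ≤ ENNReal.ofReal A * ENNReal.ofReal Cin + ENNReal.ofReal B * ENNReal.ofReal Cout :=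
          add_le_add hball hcompl
      _ = ENNReal.ofReal (A * Cin + B * Cout) := by
          rw [← ENNReal.ofReal_mul hA, ← ENNReal.ofReal_mul hB,
            ENNReal.ofReal_add (by positivity) (by positivity)]
  have hmeas : Measurable (fun y => f y * K y) := hf.mul hKm
  have hint : Integrable (fun y => f y * K y) := by
    refine ⟨hmeas.aestronglyMeasurable, ?_⟩
    rw [hasFiniteIntegral_iff_norm]
    calc ∫⁻ y, ENNReal.ofReal ‖f y * K y‖ = ∫⁻ y, ENNReal.ofReal |f y * K y| := by
          simp only [Real.norm_eq_abs]
      _ ≤ ENNReal.ofReal (A * Cin + B * Cout) := htotal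
      _ < ⊤ := ENNReal.ofReal_lt_top
  refine ⟨hint, ?_⟩
  have habs : |∫ y, f y * K y| ≤ ∫ y, |f y * K y| := by
    have := norm_integral_le_integral_norm (μ := (volume : Measure (Ed d))) (fun y => f y * K y)
    simp only [Real.norm_eq_abs] at this
    exact this
  refine habs.trans ?_
  have heq : ∫ y, |f y * K y| = (∫⁻ y, ENNReal.ofReal |f y * K y|).toReal := by
    rw [integral_eq_lintegral_of_nonneg_ae (ae_of_all _ fun y => abs_nonneg _)
      hmeas.abs.aestronglyMeasurable]
  rw [heq]
  exact ENNReal.toReal_le_of_le_ofReal (by positivity) htotal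

end AuxLemmas

/-- for `s > 1/2` and `α ∈ (2s-1,1]`, the Pucci operators map `C^{1,α}(ℝ^d)` to
`C^{0,1+α-2s}(ℝ^d)` with a universal seminorm bound. -/
theorem statement7 (d : ℕ) (hd : 1 ≤ d) (s Lam α : ℝ) (hs : s ∈ Ioo (0:ℝ) 1)
    (hs2 : 1 / 2 < s) (hLam : 0 < Lam) (hα : α ∈ Ioc (2 * s - 1) 1) :
    ∃ C : ℝ, 0 < C ∧ ∀ lam ρ : ℝ, 0 < lam → lam ≤ Lam → 0 ≤ ρ →
      ∀ φ : Ed d → ℝ, ContDiff ℝ 1 φ → (∃ Cb : ℝ, ∀ x, |φ x| ≤ Cb) →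
        (∃ Cb' : ℝ, ∀ x, ‖fderiv ℝ φ x‖ ≤ Cb') →
      ∀ H : ℝ, 0 ≤ H → (∀ x y : Ed d, ‖fderiv ℝ φ x - fderiv ℝ φ y‖ ≤ H * ‖x - y‖ ^ α) →
        (∀ x : Ed d,
          BddBelow ((fun K => opL d s K φ x) '' KernelClass d s lam Lam ρ) ∧
          BddAbove ((fun K => opL d s K φ x) '' KernelClass d s lam Lam ρ)) ∧
        ∀ x y : Ed d,
          |pucciInf d s lam Lam ρ φ x - pucciInf d s lam Lam ρ φ y| ≤
            C * H * ‖x - y‖ ^ (1 + α - 2 * s) ∧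
          |pucciSup d s lam Lam ρ φ x - pucciSup d s lam Lam ρ φ y| ≤
            C * H * ‖x - y‖ ^ (1 + α - 2 * s) := by
  obtain ⟨hs0, hs1⟩ := hs
  obtain ⟨hα1, hα2⟩ := hα
  have hα0 : 0 < α := by linarith
  have hp : 2 * s < 1 + α := by linarith
  have hq : (1:ℝ) < 2 * s := by linarith
  have hexp : 0 < 1 + α - 2 * s := by linarith
  -- constants
  set CinC : ℝ := Lam * 2 ^ (2 * s) * (1 - (1/2 : ℝ) ^ (1 + α - 2 * s))⁻¹ with hCinC
  set CoutC : ℝ := Lam * 2 ^ (1:ℝ) * (1 - (2 : ℝ) ^ (1 - 2 * s))⁻¹ with hCoutC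
  have hCinpos : 0 < CinC := by
    have h1 : (1/2 : ℝ) ^ (1 + α - 2 * s) < 1 :=
      Real.rpow_lt_one (by norm_num) (by norm_num) hexp
    have : (0:ℝ) < (1 - (1/2 : ℝ) ^ (1 + α - 2 * s))⁻¹ := by
      apply inv_pos.2; linarith
    rw [hCinC]
    have h2 : (0:ℝ) < (2:ℝ) ^ (2*s) := Real.rpow_pos_of_pos (by norm_num) _
    positivity
  have hCoutpos : 0 < CoutC := by
    have h1 : (2 : ℝ) ^ (1 - 2 * s) < 1 :=
      Real.rpow_lt_one_of_one_lt_of_neg (by norm_num) (by linarith)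
    have : (0:ℝ) < (1 - (2 : ℝ) ^ (1 - 2 * s))⁻¹ := by
      apply inv_pos.2; linarith
    rw [hCoutC]
    have h2 : (0:ℝ) < (2:ℝ) ^ (1:ℝ) := Real.rpow_pos_of_pos (by norm_num) _
    positivity
  refine ⟨2 * CinC + 2 * CoutC, by positivity, ?_⟩
  intro lam ρ hlam hlamLam hρ φ hφ ⟨Cb, hCb⟩ ⟨Cb', hCb'⟩ H hH0 hH
  have hincr : ∀ x y : Ed d, incr d s φ x y = φ (x + y) - φ x - fderiv ℝ φ x y := by
    intro x y
    unfold incr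
    rw [if_neg (by push_neg; linarith), if_neg (by intro h; rw [h] at hs2; linarith)]
  have hCb0 : 0 ≤ Cb := le_trans (abs_nonneg _) (hCb 0)
  have hCb'0 : 0 ≤ Cb' := le_trans (norm_nonneg _) (hCb' 0)
  have hincr_meas : ∀ x : Ed d, Measurable (fun y => incr d s φ x y) := by
    intro x
    have heq : (fun y => incr d s φ x y) =
        fun y : Ed d => φ (x + y) - φ x - fderiv ℝ φ x y := funext (hincr x)
    rw [heq]
    exact (((hφ.continuous.comp (continuous_const.add continuous_id)).sub
      continuous_const).sub (fderiv ℝ φ x).continuous).measurable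
  -- per-point integrability and absolute bound
  have hMast : ∀ x : Ed d, ∀ K ∈ KernelClass d s lam Lam ρ,
      Integrable (fun y => incr d s φ x y * K y) ∧
      |opL d s K φ x| ≤ H * CinC + (2 * Cb + Cb') * CoutC := by
    intro x K hK
    obtain ⟨hKm, hK0, -, hK2, -⟩ := hK
    have hin : ∀ y : Ed d, ‖y‖ < 1 → |incr d s φ x y| ≤ H * ‖y‖ ^ (1 + α) := by
      intro y _
      rw [hincr]
      exact taylor_bound hφ hα0 hH0 hH x y
    have hout : ∀ y : Ed d, 1 ≤ ‖y‖ →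
        |incr d s φ x y| ≤ (2 * Cb + Cb') * ‖y‖ ^ (1:ℝ) := by
      intro y hy
      rw [hincr, Real.rpow_one]
      have h1 : |φ (x + y) - φ x - fderiv ℝ φ x y| ≤
          |φ (x + y) - φ x| + |fderiv ℝ φ x y| := abs_sub _ _
      have h2 : |φ (x + y) - φ x| ≤ |φ (x + y)| + |φ x| := abs_sub _ _
      have h3 : |fderiv ℝ φ x y| ≤ ‖fderiv ℝ φ x‖ * ‖y‖ := by
        have := (fderiv ℝ φ x).le_opNorm y
        simpa [Real.norm_eq_abs] using this
      have h4 : ‖fderiv ℝ φ x‖ * ‖y‖ ≤ Cb' * ‖y‖ :=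
        mul_le_mul_of_nonneg_right (hCb' x) (norm_nonneg y)
      have h5 := hCb (x + y)
      have h6 := hCb x
      nlinarith [abs_nonneg (φ (x+y)), abs_nonneg (φ x)]
    have hm := master_bound hs0 hLam hKm hK0 hK2 (hincr_meas x) hp
      (by norm_num : (0:ℝ) ≤ 1) hq hH0 (by linarith) one_pos hin hout
    refine ⟨hm.1, ?_⟩
    have h2 := hm.2
    rw [Real.one_rpow, Real.one_rpow] at h2
    have : (∫ y, incr d s φ x y * K y) = opL d s K φ x := rfl
    rw [this] at h2
    calc |opL d s K φ x| ≤ H * (Lam * 2 ^ (2*s) * (1 - (1/2:ℝ) ^ (1 + α - 2*s))⁻¹ * 1) +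
          (2 * Cb + Cb') * (Lam * 2 ^ (1:ℝ) * (1 - (2:ℝ) ^ (1 - 2*s))⁻¹ * 1) := h2
      _ = H * CinC + (2 * Cb + Cb') * CoutC := by rw [hCinC, hCoutC]; ring
  -- boundedness of images
  have hBdd : ∀ x : Ed d,
      BddBelow ((fun K => opL d s K φ x) '' KernelClass d s lam Lam ρ) ∧
      BddAbove ((fun K => opL d s K φ x) '' KernelClass d s lam Lam ρ) := by
    intro x
    constructor
    · refine ⟨-(H * CinC + (2 * Cb + Cb') * CoutC), ?_⟩
      rintro a ⟨K, hK, rfl⟩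
      linarith [(abs_le.1 (hMast x K hK).2).1]
    · refine ⟨H * CinC + (2 * Cb + Cb') * CoutC, ?_⟩
      rintro a ⟨K, hK, rfl⟩
      exact (abs_le.1 (hMast x K hK).2).2
  refine ⟨hBdd, ?_⟩
  intro x z
  -- the key Hölder estimate for each kernel
  have key : ∀ K ∈ KernelClass d s lam Lam ρ,
      |opL d s K φ x - opL d s K φ z| ≤
        (2 * CinC + 2 * CoutC) * H * ‖x - z‖ ^ (1 + α - 2 * s) := by
    rcases eq_or_ne x z with rfl | hxz
    · intro K hK
      simp only [sub_self, abs_zero, norm_zero]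
      rw [Real.zero_rpow hexp.ne']
      simp
    · intro K hK
      obtain ⟨hKm, hK0, -, hK2, -⟩ := id hK
      have hr : 0 < ‖x - z‖ := norm_pos_iff.2 (sub_ne_zero.2 hxz)
      set r : ℝ := ‖x - z‖ with hrdef
      set f : Ed d → ℝ := fun y => incr d s φ x y - incr d s φ z y with hfdef
      have hfm : Measurable f := (hincr_meas x).sub (hincr_meas z)
      have hin : ∀ y : Ed d, ‖y‖ < r → |f y| ≤ (2 * H) * ‖y‖ ^ (1 + α) := by
        intro y _
        have t1 := taylor_bound hφ hα0 hH0 hH x y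
        have t2 := taylor_bound hφ hα0 hH0 hH z y
        rw [hfdef]
        simp only [hincr]
        set a := φ (x + y) - φ x - fderiv ℝ φ x y
        set b := φ (z + y) - φ z - fderiv ℝ φ z y
        calc |a - b| ≤ |a| + |b| := abs_sub _ _
          _ ≤ (2 * H) * ‖y‖ ^ (1 + α) := by linarith
      have hout : ∀ y : Ed d, r ≤ ‖y‖ → |f y| ≤ (2 * H * r ^ α) * ‖y‖ ^ (1:ℝ) := by
        intro y _
        have := cross_bound hφ hα0 hH0 hH x z y
        rw [hfdef, Real.rpow_one]
        simp only [hincr]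
        calc |(φ (x + y) - φ x - fderiv ℝ φ x y) - (φ (z + y) - φ z - fderiv ℝ φ z y)|
            ≤ 2 * H * ‖x - z‖ ^ α * ‖y‖ := this
          _ = 2 * H * r ^ α * ‖y‖ := by rw [hrdef]
      have hm := master_bound hs0 hLam hKm hK0 hK2 hfm hp (by norm_num : (0:ℝ) ≤ 1) hq
        (by linarith) (by positivity) hr hin hout
      have heq : (∫ y, f y * K y) = opL d s K φ x - opL d s K φ z := by
        unfold opL
        rw [← integral_sub (hMast x K hK).1 (hMast z K hK).1]
        congr 1
        funext y
        rw [hfdef]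
        ring
      have hre : r ^ α * r ^ (1 - 2 * s) = r ^ (1 + α - 2 * s) := by
        rw [← Real.rpow_add hr]
        congr 1
        ring
      have h2 := hm.2
      rw [heq] at h2
      calc |opL d s K φ x - opL d s K φ z|
          ≤ 2 * H * (Lam * 2 ^ (2*s) * (1 - (1/2:ℝ) ^ (1 + α - 2*s))⁻¹ * r ^ (1 + α - 2*s)) +
            2 * H * r ^ α * (Lam * 2 ^ (1:ℝ) * (1 - (2:ℝ) ^ (1 - 2*s))⁻¹ * r ^ (1 - 2*s)) := h2
        _ = (2 * CinC + 2 * CoutC) * H * r ^ (1 + α - 2 * s) := by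
            rw [hCinC, hCoutC, ← hre]
            ring
  have hM0 : 0 ≤ (2 * CinC + 2 * CoutC) * H * ‖x - z‖ ^ (1 + α - 2 * s) := by
    apply mul_nonneg (mul_nonneg (by positivity) hH0) (Real.rpow_nonneg (norm_nonneg _) _)
  constructor
  · exact abs_csInf_sub hM0 (hBdd x).1 (hBdd z).1 key
  · exact abs_csSup_sub hM0 (hBdd x).2 (hBdd z).2 key
end
end
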